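/- Let f : ℝ^N × ℝ^d → [0,∞) be Q-periodic in the first variable. For γ ∈ Q define f_hom^γ(b) := inf_{R∈ℕ} inf { ⨍_{RQ} f(y + γ, b + w(y)) dy : w ∈ L¹_{RQ-per}(ℝ^N;ℝ^d) ∩ ker 𝒜, ⨍_{RQ} w = 0 }. Then f_hom^γ(b) = f_hom(b) for every b ∈ ℝ^d and every γ ∈ Q, i.e., the cell formula is invariant under translations of the integrand in the spatial variable. -/

import Mathlib

open MeasureTheory Filter

/-- The open cube `R·Q = (-R/2, R/2)^N` centered at the origin. -/
def cubeR (N : ℕ) (R : ℝ) : Set (Fin N → ℝ) := {x | ∀ i, |x i| < R / 2}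

namespace FhomAux

open Set Pointwise

variable {N : ℕ}

def hcube (N : ℕ) (R : ℝ) (c : Fin N → ℝ) : Set (Fin N → ℝ) :=
  {x | ∀ i, x i - c i ∈ Set.Ico (0:ℝ) R}

def ocube (N : ℕ) (R : ℝ) (a : Fin N → ℝ) : Set (Fin N → ℝ) :=
  {x | ∀ i, |x i - a i| < R / 2}

lemma cubeR_eq_ocube (R : ℝ) : cubeR N R = ocube N R 0 := by
  ext x; simp [cubeR, ocube]

lemma ocube_ae (R : ℝ) (a : Fin N → ℝ) :
    ocube N R a =ᵐ[volume] hcube N R (fun i => a i - R / 2) := by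
  rw [Filter.eventuallyEq_set, MeasureTheory.ae_iff]
  have hnull : volume (⋃ i : Fin N, {x : Fin N → ℝ | x i = a i - R / 2}) = 0 := by
    refine measure_iUnion_null fun i => ?_
    have := MeasureTheory.Measure.pi_hyperplane (fun _ : Fin N => (volume : Measure ℝ)) i
      (a i - R / 2)
    simpa [MeasureTheory.volume_pi] using this
  refine measure_mono_null ?_ hnull
  intro x hx
  simp only [Set.mem_setOf_eq, not_iff] at hx
  have hoc : x ∈ ocube N R a → x ∈ hcube N R (fun i => a i - R / 2) := by
    intro h i
    have := h i
    rw [abs_lt] at this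
    exact ⟨by linarith [this.1], by linarith [this.2]⟩
  have hx2 : x ∈ hcube N R (fun i => a i - R / 2) ∧ x ∉ ocube N R a := by tauto
  obtain ⟨hh, ho⟩ := hx2
  simp only [ocube, mem_setOf_eq, not_forall, not_lt] at ho
  obtain ⟨i, hi⟩ := ho
  have h1 := (hh i).1
  have h2 := (hh i).2
  refine Set.mem_iUnion.mpr ⟨i, ?_⟩
  simp only [mem_setOf_eq]
  rcases abs_cases (x i - a i) with ⟨he, _⟩ | ⟨he, _⟩ <;> rw [he] at hi <;> linarith

variable (R : ℝ) (hR : 0 < R)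

/-- The scaled standard basis `R • eᵢ`. -/
noncomputable def lbasis : Module.Basis (Fin N) ℝ (Fin N → ℝ) :=
  (Pi.basisFun ℝ (Fin N)).isUnitSMul
    (fun _ : Fin N => isUnit_iff_ne_zero.mpr (ne_of_gt hR))

lemma lbasis_repr (x : Fin N → ℝ) (i : Fin N) :
    (lbasis (N := N) R hR).repr x i = R⁻¹ * x i := by
  rw [lbasis, Module.Basis.isUnitSMul]
  rw [Module.Basis.repr_unitsSMul]
  simp [Units.smul_def]

lemma lbasis_apply (i : Fin N) :
    (lbasis (N := N) R hR) i = Pi.single i R := by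
  rw [lbasis, Module.Basis.isUnitSMul_apply]
  ext j
  rcases eq_or_ne j i with rfl | hj
  · simp
  · simp [Pi.single_apply, hj.symm, Ne.symm hj]

/-- The lattice subgroup. -/
noncomputable def lat : AddSubgroup (Fin N → ℝ) :=
  (Submodule.span ℤ (Set.range (lbasis (N := N) R hR))).toAddSubgroup

lemma inv_mul_mem_Ico {R t : ℝ} (hR : 0 < R) : R⁻¹ * t ∈ Set.Ico (0:ℝ) 1 ↔ t ∈ Set.Ico 0 R := by
  rw [inv_mul_eq_div, Set.mem_Ico, Set.mem_Ico, le_div_iff₀ hR, div_lt_one hR, zero_mul]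

lemma hcube_eq_vadd (c : Fin N → ℝ) :
    hcube N R c = c +ᵥ ZSpan.fundamentalDomain (lbasis (N := N) R hR) := by
  ext x
  rw [Set.mem_vadd_set_iff_neg_vadd_mem]
  simp only [ZSpan.mem_fundamentalDomain, lbasis_repr, vadd_eq_add, hcube, Set.mem_setOf_eq,
    Pi.add_apply, Pi.neg_apply]
  refine forall_congr' fun i => ?_
  rw [show -c i + x i = x i - c i by ring, ← inv_mul_mem_Ico hR]

include hR in
lemma lat_countable : Countable (lat (N := N) R hR) := by
  change Countable (Submodule.span ℤ (Set.range (lbasis (N := N) R hR)))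
  infer_instance

lemma lat_isFD (c : Fin N → ℝ) :
    IsAddFundamentalDomain (lat (N := N) R hR) (hcube N R c) volume := by
  have h0 := ZSpan.isAddFundamentalDomain' (lbasis (N := N) R hR) volume
  haveI : VAddCommClass (Fin N → ℝ) (lat (N := N) R hR) (Fin N → ℝ) :=
    ⟨fun a g x => by
      show a + (↑g + x) = ↑g + (a + x)
      exact add_left_comm a (↑g) x⟩
  rw [hcube_eq_vadd R hR]
  exact h0.vadd_of_comm c

lemma lat_invariant {E : Type*} (g : (Fin N → ℝ) → E)
    (hper : ∀ x i, g (x + Pi.single i R) = g x) :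
    ∀ (v : lat (N := N) R hR) (x : Fin N → ℝ), g (v +ᵥ x) = g x := by
  let S : AddSubgroup (Fin N → ℝ) :=
    { carrier := {v | ∀ x, g (v + x) = g x}
      zero_mem' := fun x => by rw [zero_add]
      add_mem' := fun {u v} hu hv x => by rw [add_assoc, hu, hv]
      neg_mem' := fun {v} hv x => by
        have h := hv (-v + x)
        rw [add_neg_cancel_left] at h
        exact h.symm }
  have hle : Submodule.span ℤ (Set.range (lbasis (N := N) R hR))
      ≤ AddSubgroup.toIntSubmodule S := by
    rw [Submodule.span_le]
    rintro _ ⟨i, rfl⟩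
    show ∀ x, g _ = g x
    intro x
    rw [lbasis_apply R hR, add_comm]
    exact hper x i
  intro v x
  exact hle v.2 x

include hR in
lemma shift_setIntegral {E : Type*} [NormedAddCommGroup E] [NormedSpace ℝ E]
    (g : (Fin N → ℝ) → E) (hper : ∀ x i, g (x + Pi.single i R) = g x) (γ : Fin N → ℝ) :
    ∫ x in cubeR N R, g (x + γ) = ∫ x in cubeR N R, g x := by
  haveI : Countable (lat (N := N) R hR) := lat_countable R hR
  have hinv := lat_invariant R hR g hper
  have hmp : MeasurePreserving (fun x : Fin N → ℝ => x + γ) volume volume :=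
    measurePreserving_add_right volume γ
  have hemb : MeasurableEmbedding (fun x : Fin N → ℝ => x + γ) :=
    (MeasurableEquiv.addRight γ).measurableEmbedding
  have himg : (fun x : Fin N → ℝ => x + γ) '' cubeR N R = ocube N R γ := by
    ext x
    simp only [Set.mem_image, cubeR_eq_ocube, ocube, Set.mem_setOf_eq]
    constructor
    · rintro ⟨y, hy, rfl⟩ i; simpa using hy i
    · intro hx; exact ⟨x - γ, fun i => by simpa using hx i, by simp⟩
  calc ∫ x in cubeR N R, g (x + γ)
      = ∫ y in (fun x : Fin N → ℝ => x + γ) '' cubeR N R, g y :=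
        (hmp.setIntegral_image_emb hemb g _).symm
    _ = ∫ y in ocube N R γ, g y := by rw [himg]
    _ = ∫ y in hcube N R (fun i => γ i - R / 2), g y :=
        setIntegral_congr_set (ocube_ae R γ)
    _ = ∫ y in hcube N R (fun i => (0 : Fin N → ℝ) i - R / 2), g y :=
        (lat_isFD R hR _).setIntegral_eq (lat_isFD R hR _) hinv
    _ = ∫ y in ocube N R 0, g y := (setIntegral_congr_set (ocube_ae R 0)).symm
    _ = ∫ y in cubeR N R, g y := by rw [cubeR_eq_ocube]

include hR in
lemma shift_integrableOn {E : Type*} [NormedAddCommGroup E]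
    (g : (Fin N → ℝ) → E) (hper : ∀ x i, g (x + Pi.single i R) = g x) (γ : Fin N → ℝ) :
    IntegrableOn (fun x => g (x + γ)) (cubeR N R) ↔ IntegrableOn g (cubeR N R) := by
  haveI : Countable (lat (N := N) R hR) := lat_countable R hR
  have hinv := lat_invariant R hR g hper
  have hmp : MeasurePreserving (fun x : Fin N → ℝ => x + γ) volume volume :=
    measurePreserving_add_right volume γ
  have hemb : MeasurableEmbedding (fun x : Fin N → ℝ => x + γ) :=
    (MeasurableEquiv.addRight γ).measurableEmbedding
  have himg : (fun x : Fin N → ℝ => x + γ) '' cubeR N R = ocube N R γ := by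
    ext x
    simp only [Set.mem_image, cubeR_eq_ocube, ocube, Set.mem_setOf_eq]
    constructor
    · rintro ⟨y, hy, rfl⟩ i; simpa using hy i
    · intro hx; exact ⟨x - γ, fun i => by simpa using hx i, by simp⟩
  have h1 : IntegrableOn (fun x => g (x + γ)) (cubeR N R)
      ↔ IntegrableOn g (ocube N R γ) := by
    rw [← himg]
    exact (hmp.integrableOn_image hemb).symm
  have h2 : IntegrableOn g (ocube N R γ)
      ↔ IntegrableOn g (hcube N R fun i => γ i - R / 2) := by
    unfold IntegrableOn
    rw [Measure.restrict_congr_set (ocube_ae R γ)]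
  have h3 := (lat_isFD R hR (fun i => γ i - R / 2)).integrableOn_iff
    (lat_isFD R hR (fun i => (0 : Fin N → ℝ) i - R / 2)) hinv
  have h4 : IntegrableOn g (hcube N R fun i => (0 : Fin N → ℝ) i - R / 2)
      ↔ IntegrableOn g (cubeR N R) := by
    unfold IntegrableOn
    rw [← Measure.restrict_congr_set (ocube_ae R 0), cubeR_eq_ocube]
  rw [h1, h2, h3, h4]

include hR in
lemma shift_setAverage {E : Type*} [NormedAddCommGroup E] [NormedSpace ℝ E]
    (g : (Fin N → ℝ) → E) (hper : ∀ x i, g (x + Pi.single i R) = g x) (γ : Fin N → ℝ) :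
    (⨍ x in cubeR N R, g (x + γ)) = ⨍ x in cubeR N R, g x := by
  rw [setAverage_eq, setAverage_eq, shift_setIntegral R hR g hper γ]

end FhomAux

open FhomAux in
/-- invariance of the cell formula under spatial translations of
the integrand: `f_hom^γ(b) = f_hom(b)` for every `γ ∈ Q`.  The kernel
constraint `𝒜 w = 0` is encoded by a translation-invariant predicate `kerA`,
as is the case for any constant-coefficient operator. -/
theorem fhom_translation_invariance {N d : ℕ}
    (f : (Fin N → ℝ) → (Fin d → ℝ) → ℝ)
    (hf0 : ∀ x ξ, 0 ≤ f x ξ)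
    (hmeas : Measurable (Function.uncurry f))
    (C₂ : ℝ) (hupp : ∀ x ξ, f x ξ ≤ C₂ * (1 + ‖ξ‖))
    (hper : ∀ (ξ : Fin d → ℝ) (x : Fin N → ℝ) (i : Fin N),
      f (x + Pi.single i 1) ξ = f x ξ)
    (kerA : ((Fin N → ℝ) → (Fin d → ℝ)) → Prop)
    (hker_transl : ∀ (w : (Fin N → ℝ) → (Fin d → ℝ)) (γ : Fin N → ℝ),
      kerA w → kerA (fun x => w (x - γ)))
    (γ : Fin N → ℝ) (hγ : γ ∈ cubeR N 1) (b : Fin d → ℝ) :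
    sInf { v : ℝ | ∃ R : ℕ, 0 < R ∧ ∃ w : (Fin N → ℝ) → (Fin d → ℝ),
        Measurable w ∧ IntegrableOn w (cubeR N R) ∧
        (∀ (x : Fin N → ℝ) (i : Fin N), w (x + Pi.single i (R : ℝ)) = w x) ∧
        (⨍ x in cubeR N R, w x) = 0 ∧ kerA w ∧
        v = ⨍ y in cubeR N R, f (y + γ) (b + w y) }
      = sInf { v : ℝ | ∃ R : ℕ, 0 < R ∧ ∃ w : (Fin N → ℝ) → (Fin d → ℝ),
        Measurable w ∧ IntegrableOn w (cubeR N R) ∧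
        (∀ (x : Fin N → ℝ) (i : Fin N), w (x + Pi.single i (R : ℝ)) = w x) ∧
        (⨍ x in cubeR N R, w x) = 0 ∧ kerA w ∧
        v = ⨍ y in cubeR N R, f y (b + w y) } := by
  have fnatper : ∀ (n : ℕ) (x : Fin N → ℝ) (ξ : Fin d → ℝ) (i : Fin N),
      f (x + Pi.single i (n : ℝ)) ξ = f x ξ := by
    intro n
    induction n with
    | zero => intro x ξ i; simp
    | succ n ih =>
      intro x ξ i
      have : (((n : ℕ) + 1 : ℕ) : ℝ) = (n : ℝ) + 1 := by push_cast; ring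
      rw [this, Pi.single_add, ← add_assoc, hper, ih]
  congr 1
  ext v
  simp only [Set.mem_setOf_eq]
  constructor
  · rintro ⟨R, hR, w, hwm, hwint, hwper, hwavg, hker, rfl⟩
    have hRpos : (0 : ℝ) < (R : ℝ) := by exact_mod_cast hR
    set g₁ : (Fin N → ℝ) → ℝ := fun y => f (y + γ) (b + w y) with hg₁
    have hg₁per : ∀ x i, g₁ (x + Pi.single i (R : ℝ)) = g₁ x := by
      intro x i
      simp only [hg₁]
      rw [hwper, add_right_comm x (Pi.single i (R : ℝ)) γ, fnatper]
    refine ⟨R, hR, fun x => w (x - γ),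
      hwm.comp (measurable_id.sub measurable_const), ?_, ?_, ?_,
      hker_transl w γ hker, ?_⟩
    · have : (fun x => w (x - γ)) = fun x => w (x + (-γ)) := by
        funext x; rw [sub_eq_add_neg]
      rw [this]
      exact (shift_integrableOn (R : ℝ) hRpos w hwper (-γ)).mpr hwint
    · intro x i
      show w (x + Pi.single i (R : ℝ) - γ) = w (x - γ)
      rw [add_sub_right_comm, hwper]
    · have : (fun x => w (x - γ)) = fun x => w (x + (-γ)) := by
        funext x; rw [sub_eq_add_neg]
      rw [this, shift_setAverage (R : ℝ) hRpos w hwper (-γ), hwavg]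
    · have : (fun y => f y (b + w (y - γ))) = fun y => g₁ (y + (-γ)) := by
        funext y
        simp only [hg₁]
        rw [neg_add_cancel_right, sub_eq_add_neg]
      rw [this, shift_setAverage (R : ℝ) hRpos g₁ hg₁per (-γ)]
  · rintro ⟨R, hR, w, hwm, hwint, hwper, hwavg, hker, rfl⟩
    have hRpos : (0 : ℝ) < (R : ℝ) := by exact_mod_cast hR
    set g₀ : (Fin N → ℝ) → ℝ := fun y => f y (b + w y) with hg₀
    have hg₀per : ∀ x i, g₀ (x + Pi.single i (R : ℝ)) = g₀ x := by
      intro x i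
      simp only [hg₀]
      rw [hwper, fnatper]
    refine ⟨R, hR, fun x => w (x - (-γ)),
      hwm.comp (measurable_id.sub measurable_const), ?_, ?_, ?_,
      hker_transl w (-γ) hker, ?_⟩
    · have : (fun x => w (x - (-γ))) = fun x => w (x + γ) := by
        funext x; rw [sub_neg_eq_add]
      rw [this]
      exact (shift_integrableOn (R : ℝ) hRpos w hwper γ).mpr hwint
    · intro x i
      show w (x + Pi.single i (R : ℝ) - -γ) = w (x - -γ)
      rw [add_sub_right_comm, hwper]
    · have : (fun x => w (x - (-γ))) = fun x => w (x + γ) := by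
        funext x; rw [sub_neg_eq_add]
      rw [this, shift_setAverage (R : ℝ) hRpos w hwper γ, hwavg]
    · have : (fun y => f (y + γ) (b + w (y - (-γ)))) = fun y => g₀ (y + γ) := by
        funext y
        simp only [hg₀]
        rw [sub_neg_eq_add]
      rw [this, shift_setAverage (R : ℝ) hRpos g₀ hg₀per γ]
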